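/- Let I ⊆ ℝ be an interval and let a₊, a₋, β₁ : I → ℝ be differentiable functions with a₊(t) > 0 for all t ∈ I, satisfying the ODE system a₊' = 4·a₊·a₋, a₋' = 2·(a₊ + a₋ − 16)·a₋, and β₁' = −a₋·β₁. Then there exists a constant α ∈ ℝ such that a₋(t) = a₊(t) + 4α·√(a₊(t)) + 16 for all t ∈ I (equivalently, the function t ↦ (a₋(t) − a₊(t) − 16)/√(a₊(t)) is constant on I), and moreover the function t ↦ β₁(t)·a₊(t)^(1/4) is constant on I. -/

import Mathlib

private lemma const_of_deriv_zero {I : Set ℝ} (hI : I.OrdConnected) {f : ℝ → ℝ}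
    (h : ∀ t ∈ I, HasDerivAt f 0 t) : ∀ t ∈ I, ∀ s ∈ I, f t = f s := by
  intro t ht s hs
  have := Convex.norm_image_sub_le_of_norm_hasDerivWithin_le (f' := fun _ => (0:ℝ)) (C := 0)
    (fun x hx => (h x hx).hasDerivWithinAt) (fun x _ => by simp) hI.convex hs ht
  have h0 : ‖f t - f s‖ ≤ 0 := by simpa using this
  have := le_antisymm h0 (norm_nonneg _)
  rwa [norm_eq_zero, sub_eq_zero] at this

/-- Conserved quantities of the Whitham ODE system
`a₊' = 4·a₊·a₋`, `a₋' = 2·(a₊ + a₋ − 16)·a₋`, `β₁' = −a₋·β₁` on an interval `I`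
with `a₊ > 0`: there is `α ∈ ℝ` with `a₋ = a₊ + 4α√a₊ + 16` on `I`, and
`β₁·a₊^(1/4)` is constant on `I`. -/
theorem stmt_1 (I : Set ℝ) (hI : I.OrdConnected) (ap am β₁ : ℝ → ℝ)
    (hpos : ∀ t ∈ I, 0 < ap t)
    (hap : ∀ t ∈ I, HasDerivAt ap (4 * ap t * am t) t)
    (ham : ∀ t ∈ I, HasDerivAt am (2 * (ap t + am t - 16) * am t) t)
    (hβ₁ : ∀ t ∈ I, HasDerivAt β₁ (-(am t) * β₁ t) t) :
    (∃ α : ℝ, ∀ t ∈ I, am t = ap t + 4 * α * Real.sqrt (ap t) + 16) ∧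
    (∀ t ∈ I, ∀ s ∈ I,
      β₁ t * (ap t) ^ ((1 : ℝ) / 4) = β₁ s * (ap s) ^ ((1 : ℝ) / 4)) := by
  -- derivative of √(ap)
  have hsq : ∀ t ∈ I, Real.sqrt (ap t) ≠ 0 := fun t ht =>
    ne_of_gt (Real.sqrt_pos.2 (hpos t ht))
  have hsqderiv : ∀ t ∈ I, HasDerivAt (fun u => Real.sqrt (ap u))
      (4 * ap t * am t / (2 * Real.sqrt (ap t))) t := fun t ht =>
    (hap t ht).sqrt (ne_of_gt (hpos t ht))
  -- first conserved quantity f = (am - ap - 16) / √ap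
  have hf : ∀ t ∈ I, HasDerivAt (fun u => (am u - ap u - 16) / Real.sqrt (ap u)) 0 t := by
    intro t ht
    have h1 : HasDerivAt (fun u => am u - ap u - 16)
        (2 * (ap t + am t - 16) * am t - 4 * ap t * am t) t :=
      (((ham t ht).sub (hap t ht)).sub_const 16)
    have := h1.div (hsqderiv t ht) (hsq t ht)
    refine this.congr_deriv (Eq.symm ?_)
    have hs2 : Real.sqrt (ap t) * Real.sqrt (ap t) = ap t :=
      Real.mul_self_sqrt (hpos t ht).le
    have hsne := hsq t ht
    field_simp
    linear_combination (-(4 * am t * (am t - ap t - 16))) * hs2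
  have hfc := const_of_deriv_zero hI hf
  -- second conserved quantity g = β₁ * ap^(1/4)
  have hg : ∀ t ∈ I, HasDerivAt (fun u => β₁ u * (ap u) ^ ((1:ℝ)/4)) 0 t := by
    intro t ht
    have h4 : HasDerivAt (fun u => (ap u) ^ ((1:ℝ)/4))
        (4 * ap t * am t * ((1:ℝ)/4) * ap t ^ ((1:ℝ)/4 - 1)) t :=
      (hap t ht).rpow_const (Or.inl (ne_of_gt (hpos t ht)))
    have := (hβ₁ t ht).mul h4
    refine this.congr_deriv (Eq.symm ?_)
    have hppos := hpos t ht
    have key : ap t * ap t ^ ((1:ℝ)/4 - 1) = ap t ^ ((1:ℝ)/4) := by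
      rw [← Real.rpow_one_add' (le_of_lt hppos) (by norm_num)]
      norm_num
    have : 4 * ap t * am t * ((1:ℝ)/4) * ap t ^ ((1:ℝ)/4 - 1)
        = am t * ap t ^ ((1:ℝ)/4) := by
      rw [show 4 * ap t * am t * ((1:ℝ)/4) * ap t ^ ((1:ℝ)/4 - 1)
          = am t * (ap t * ap t ^ ((1:ℝ)/4 - 1)) by ring, key]
    rw [this]; ring
  refine ⟨?_, const_of_deriv_zero hI hg⟩
  rcases I.eq_empty_or_nonempty with rfl | ⟨t₀, ht₀⟩
  · exact ⟨0, by simp⟩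
  · refine ⟨(am t₀ - ap t₀ - 16) / Real.sqrt (ap t₀) / 4, fun t ht => ?_⟩
    have h := hfc t ht t₀ ht₀
    have hsne := hsq t ht
    have hsne0 := hsq t₀ ht₀
    field_simp at h ⊢
    linarith [h]
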